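/- Let M be a monomial ideal with lcm lattice L_M, and let P be the abstract finite atomic lattice isomorphic to L_M. Define the deficit labeling D on P by m_p = gcd{ l_t : t > p } / l_p, where l_p denotes the monomial in L_M corresponding to p, and for p = 1̂ the gcd over the empty set is defined to be l_{1̂}. Then D is a coordinatization of P and the resulting monomial ideal M_{P,D} equals M. -/

import Mathlib

open scoped Classical

/-- Monomials in variables `V`, represented by exponent vectors.
Multiplication is `+`, divisibility is `≤`, gcd is `⊓`, lcm is `⊔`, and the
trivial monomial `1` is `0`. -/
abbrev Monomial (V : Type*) := V →₀ ℕ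

/-- An element `x` is meet-irreducible if `x ≠ ⊤` and `x ≠ a ⊓ b` for all `a, b > x`. -/
def MeetIrred {P : Type*} [Lattice P] [OrderTop P] (x : P) : Prop :=
  x ≠ ⊤ ∧ ∀ a b : P, x < a → x < b → x ≠ a ⊓ b

/-- A finite lattice is atomic if every element other than `⊥` is the join of
the atoms below it. -/
def IsFinAtomic (P : Type*) [Lattice P] [BoundedOrder P] : Prop :=
  ∀ p : P, p ≠ ⊥ → IsLUB {a : P | IsAtom a ∧ a ≤ p} p

/-- The monomial `x(a) = ∏_{p ∈ (⌈a⌉)ᶜ} m_p` attached to `a` by a labeling `m`. -/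
noncomputable def coordGen {P V : Type*} [PartialOrder P] [Fintype P]
    (m : P → Monomial V) (a : P) : Monomial V :=
  ∑ p ∈ Finset.univ.filter (fun p : P => ¬ a ≤ p), m p

/-- The lcm lattice of a finite family of monomials: all least common multiples
of subsets of the family (the empty lcm being `1`), ordered by divisibility. -/
abbrev LcmLat {ι V : Type*} [Fintype ι] (g : ι → Monomial V) : Type _ :=
  {l : Monomial V // ∃ s : Finset ι, l = s.sup g}

/-- Condition (C1): every meet-irreducible element has a nontrivial label. -/
def CondC1 {P V : Type*} [Lattice P] [BoundedOrder P] (m : P → Monomial V) : Prop :=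
  ∀ p : P, MeetIrred p → m p ≠ 0

/-- Condition (C2): labels with a common variable sit on comparable elements. -/
def CondC2 {P V : Type*} [PartialOrder P] (m : P → Monomial V) : Prop :=
  ∀ p q : P, m p ⊓ m q ≠ 0 → p ≤ q ∨ q ≤ p

/-- A labeling is a coordinatization if the lcm lattice of the ideal generated
by the monomials `x(a)`, for `a` ranging over the atoms, is isomorphic to `P`. -/
def IsCoordinatization {P V : Type*} [PartialOrder P] [OrderBot P] [Fintype P]
    (m : P → Monomial V) : Prop :=
  Nonempty (P ≃o LcmLat (fun a : {a : P // IsAtom a} => coordGen m a.val))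

section LcmLatInstances

variable {ι V : Type*} [Fintype ι] (g : ι → Monomial V)

instance : Finite (LcmLat g) :=
  Finite.of_surjective (fun s : Finset ι => (⟨s.sup g, s, rfl⟩ : LcmLat g))
    (fun l => by obtain ⟨s, hs⟩ := l.2; exact ⟨s, Subtype.ext hs.symm⟩)

noncomputable instance : Fintype (LcmLat g) := Fintype.ofFinite _

instance : OrderBot (LcmLat g) where
  bot := ⟨⊥, ∅, Finset.sup_empty.symm⟩
  bot_le := fun l => by exact bot_le (a := l.val)

/-- The monomial corresponding to `p` in the lcm lattice. -/
def lcmVal (p : LcmLat g) : Monomial V := p.val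

/-- `gcd { l_t : t > p }` in the lcm lattice, with the convention that for
`p = 1̂` (where the set above is empty) it equals `l_{1̂}`. -/
noncomputable def lcmGcdAbove (p : LcmLat g) : Monomial V :=
  if h : (Finset.univ.filter (fun t : LcmLat g => p < t)).Nonempty
  then (Finset.univ.filter (fun t : LcmLat g => p < t)).inf' h (lcmVal g)
  else lcmVal g p

/-- The deficit labeling `D` on the lcm lattice: `m_p = gcd{ l_t : t > p } / l_p`. -/
noncomputable def lcmDeficit (p : LcmLat g) : Monomial V :=
  lcmGcdAbove g p - lcmVal g p

end LcmLatInstances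

section DeficitAux

open Finset

variable {ι V : Type*} [Fintype ι] (g : ι → Monomial V)

lemma lcm_apply_mono {p q : LcmLat g} (h : p ≤ q) (v : V) : p.val v ≤ q.val v :=
  Finsupp.le_def.mp h v

lemma exists_join (p q : LcmLat g) : ∃ u : LcmLat g, u.val = p.val ⊔ q.val := by
  obtain ⟨s, hs⟩ := p.2
  obtain ⟨t, ht⟩ := q.2
  exact ⟨⟨p.val ⊔ q.val, s ∪ t, by rw [Finset.sup_union, hs, ht]⟩, rfl⟩

lemma finsupp_inf'_apply {α : Type*} (s : Finset α) (hs : s.Nonempty) (F : α → Monomial V)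
    (v : V) : s.inf' hs F v = s.inf' hs fun t => F t v := by
  induction hs using Finset.Nonempty.cons_induction with
  | singleton a => simp
  | cons a s ha hs ih =>
      rw [Finset.inf'_cons hs, Finset.inf'_cons hs, Finsupp.inf_apply, ih]

lemma lcmGcdAbove_le {p t : LcmLat g} (h : p < t) (v : V) :
    lcmGcdAbove g p v ≤ t.val v := by
  have hne : (Finset.univ.filter (fun t : LcmLat g => p < t)).Nonempty :=
    ⟨t, by simp [h]⟩
  rw [lcmGcdAbove, dif_pos hne, finsupp_inf'_apply]
  exact Finset.inf'_le _ (by simp [h])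

lemma le_lcmGcdAbove (p : LcmLat g) (v : V) : p.val v ≤ lcmGcdAbove g p v := by
  rw [lcmGcdAbove]
  split_ifs with h
  · rw [finsupp_inf'_apply]
    exact Finset.le_inf' _ _ fun t ht =>
      lcm_apply_mono g (le_of_lt (by simpa using ht)) v
  · exact le_rfl

lemma exists_gcdAbove_eq {p : LcmLat g} (h : ∃ t : LcmLat g, p < t) (v : V) :
    ∃ t : LcmLat g, p < t ∧ t.val v = lcmGcdAbove g p v := by
  obtain ⟨t0, ht0⟩ := h
  have hne : (Finset.univ.filter (fun t : LcmLat g => p < t)).Nonempty :=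
    ⟨t0, by simp [ht0]⟩
  rw [lcmGcdAbove, dif_pos hne, finsupp_inf'_apply]
  obtain ⟨t, htm, hte⟩ := Finset.exists_mem_eq_inf' hne (fun t : LcmLat g => lcmVal g t v)
  exact ⟨t, by simpa using htm, hte.symm⟩

lemma lcmDeficit_apply (p : LcmLat g) (v : V) :
    lcmDeficit g p v = lcmGcdAbove g p v - p.val v :=
  Finsupp.tsub_apply _ _ _

lemma deficit_lt {v : V} {p t : LcmLat g} (hd : lcmDeficit g p v ≠ 0) (ht : p < t) :
    p.val v < t.val v := by
  have h0 := lcmDeficit_apply g p v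
  have h1 := le_lcmGcdAbove g p v
  have h2 := lcmGcdAbove_le g ht v
  omega

lemma deficit_comparable {v : V} {p q : LcmLat g}
    (hp : lcmDeficit g p v ≠ 0) (hq : lcmDeficit g q v ≠ 0) : p ≤ q ∨ q ≤ p := by
  by_contra hc
  push_neg at hc
  obtain ⟨u, hu⟩ := exists_join g p q
  have hpu : p < u := by
    refine lt_of_le_of_ne (Subtype.coe_le_coe.mp (by rw [hu]; exact le_sup_left)) ?_
    rintro rfl
    exact hc.2 (Subtype.coe_le_coe.mp (by rw [hu]; exact le_sup_right))
  have hqu : q < u := by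
    refine lt_of_le_of_ne (Subtype.coe_le_coe.mp (by rw [hu]; exact le_sup_right)) ?_
    rintro rfl
    exact hc.1 (Subtype.coe_le_coe.mp (by rw [hu]; exact le_sup_left))
  have h1 : p.val v < u.val v := deficit_lt g hp hpu
  have h2 : q.val v < u.val v := deficit_lt g hq hqu
  have h3 : u.val v = p.val v ⊔ q.val v := by rw [hu]; exact Finsupp.sup_apply _ _ _
  simp only [h3] at h1 h2
  omega

/-- The set of elements above `p`, not above `q`, with nonzero deficit in variable `v`. -/
noncomputable def Aset (v : V) (p q : LcmLat g) : Finset (LcmLat g) :=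
  Finset.univ.filter fun c : LcmLat g => p ≤ c ∧ ¬ q ≤ c ∧ lcmDeficit g c v ≠ 0

lemma mem_Aset {v : V} {p q c : LcmLat g} :
    c ∈ Aset g v p q ↔ p ≤ c ∧ ¬ q ≤ c ∧ lcmDeficit g c v ≠ 0 := by
  simp [Aset]

lemma lowerB (v : V) : ∀ n : ℕ, ∀ p q : LcmLat g, (Aset g v p q).card ≤ n → p ≤ q →
    p.val v + ∑ c ∈ Aset g v p q, lcmDeficit g c v ≤ q.val v := by
  intro n
  induction n with
  | zero =>
      intro p q hc hpq
      have he : Aset g v p q = ∅ := Finset.card_eq_zero.mp (Nat.le_zero.mp hc)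
      simpa [he] using lcm_apply_mono g hpq v
  | succ n ih =>
      intro p q hc hpq
      rcases (Aset g v p q).eq_empty_or_nonempty with he | hA
      · simpa [he] using lcm_apply_mono g hpq v
      obtain ⟨cs, hcs, hmax⟩ : ∃ cs ∈ Aset g v p q, ∀ c ∈ Aset g v p q, ¬ cs < c := by
        obtain ⟨cs, hcs⟩ := Finset.exists_maximal hA
        exact ⟨cs, hcs.prop, fun c hc => hcs.not_gt hc⟩
      obtain ⟨hpcs, hqcs, hdcs⟩ := (mem_Aset g).mp hcs
      -- every other element of the set is `< cs`
      have hlt : ∀ c ∈ Aset g v p q, c ≠ cs → c < cs := by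
        intro c hcm hne'
        obtain ⟨_, _, hdc⟩ := (mem_Aset g).mp hcm
        rcases deficit_comparable g hdc hdcs with h | h
        · exact lt_of_le_of_ne h hne'
        · exact absurd (lt_of_le_of_ne h (Ne.symm hne')) (hmax c hcm)
      -- step: cs.val v + deficit ≤ q.val v
      obtain ⟨u, hu⟩ := exists_join g q cs
      have hcsu : cs < u := by
        refine lt_of_le_of_ne (Subtype.coe_le_coe.mp (by rw [hu]; exact le_sup_right)) ?_
        rintro rfl
        exact hqcs (Subtype.coe_le_coe.mp (by rw [hu]; exact le_sup_left))
      have hstep : cs.val v + lcmDeficit g cs v ≤ q.val v := by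
        have hA1 : lcmGcdAbove g cs v ≤ u.val v := lcmGcdAbove_le g hcsu v
        have hB1 : u.val v = q.val v ⊔ cs.val v := by rw [hu]; exact Finsupp.sup_apply _ _ _
        have hC1 := le_lcmGcdAbove g cs v
        have hD1 := lcmDeficit_apply g cs v
        simp only [hB1] at hA1
        omega
      -- identify the rest of the set
      have key : Aset g v p cs = (Aset g v p q).erase cs := by
        ext c
        simp only [Finset.mem_erase, mem_Aset]
        constructor
        · rintro ⟨hpc, hcsc, hdc⟩
          have hccs : c < cs := by
            rcases deficit_comparable g hdc hdcs with h | h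
            · exact lt_of_le_of_ne h (fun h' => hcsc (h' ▸ le_rfl))
            · exact absurd h hcsc
          refine ⟨ne_of_lt hccs, hpc, fun hqc => hqcs (le_trans hqc hccs.le), hdc⟩
        · rintro ⟨hne', hpc, hqc, hdc⟩
          have hccs : c < cs := hlt c ((mem_Aset g).mpr ⟨hpc, hqc, hdc⟩) hne'
          exact ⟨hpc, fun h => absurd (lt_of_le_of_lt h hccs) (lt_irrefl _), hdc⟩
      have hcard' : (Aset g v p cs).card ≤ n := by
        rw [key, Finset.card_erase_of_mem hcs]
        omega
      have ih' := ih p cs hcard' hpcs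
      have hsum : ∑ c ∈ Aset g v p q, lcmDeficit g c v
          = lcmDeficit g cs v + ∑ c ∈ Aset g v p cs, lcmDeficit g c v := by
        rw [key]
        exact (Finset.add_sum_erase _ _ hcs).symm
      omega

lemma upper0 (v : V) : ∀ n : ℕ, ∀ p q : LcmLat g,
    (Finset.univ.filter fun t : LcmLat g => p < t).card ≤ n → p ≤ q →
    Aset g v p q = ∅ → q.val v ≤ p.val v := by
  intro n
  induction n with
  | zero =>
      intro p q hcard hpq hA
      rcases eq_or_lt_of_le hpq with rfl | hlt
      · exact le_rfl
      · exact absurd hcard (by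
          simp only [not_le]
          exact Finset.card_pos.mpr ⟨q, by simp [hlt]⟩)
  | succ n ih =>
      intro p q hcard hpq hA
      rcases eq_or_lt_of_le hpq with rfl | hlt
      · exact le_rfl
      have hmp : lcmDeficit g p v = 0 := by
        by_contra h
        have : p ∈ Aset g v p q := (mem_Aset g).mpr ⟨le_rfl, fun h' => absurd (lt_of_lt_of_le hlt h') (lt_irrefl _), h⟩
        rw [hA] at this
        exact absurd this (Finset.notMem_empty _)
      obtain ⟨t, hpt, htv⟩ := exists_gcdAbove_eq g ⟨q, hlt⟩ v
      have htp : t.val v = p.val v := by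
        have h1 := le_lcmGcdAbove g p v
        have h2 := lcmDeficit_apply g p v
        omega
      obtain ⟨u, hu⟩ := exists_join g q t
      have htu : t ≤ u := Subtype.coe_le_coe.mp (by rw [hu]; exact le_sup_right)
      have hqu : q ≤ u := Subtype.coe_le_coe.mp (by rw [hu]; exact le_sup_left)
      have hA' : Aset g v t u = ∅ := by
        rw [Finset.eq_empty_iff_forall_notMem]
        intro c hcm
        obtain ⟨htc, huc, hdc⟩ := (mem_Aset g).mp hcm
        have hpc : p ≤ c := le_trans hpt.le htc
        have hqc : ¬ q ≤ c := by
          intro hqc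
          exact huc (Subtype.coe_le_coe.mp (by rw [hu]; exact sup_le hqc htc))
        have : c ∈ Aset g v p q := (mem_Aset g).mpr ⟨hpc, hqc, hdc⟩
        rw [hA] at this
        exact absurd this (Finset.notMem_empty _)
      have hcard' : (Finset.univ.filter fun s : LcmLat g => t < s).card ≤ n := by
        have hss : (Finset.univ.filter fun s : LcmLat g => t < s)
            ⊆ (Finset.univ.filter fun s : LcmLat g => p < s).erase t := by
          intro s hs
          simp only [Finset.mem_filter, Finset.mem_erase, Finset.mem_univ, true_and] at hs ⊢
          exact ⟨ne_of_gt hs, lt_trans hpt hs⟩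
        have := Finset.card_le_card hss
        have ht' : t ∈ Finset.univ.filter fun s : LcmLat g => p < s := by simp [hpt]
        rw [Finset.card_erase_of_mem ht'] at this
        omega
      have hfin := ih t u hcard' htu hA'
      have := lcm_apply_mono g hqu v
      omega

lemma upperB (v : V) : ∀ n : ℕ, ∀ p q : LcmLat g,
    (Finset.univ.filter fun t : LcmLat g => p < t).card ≤ n → p ≤ q →
    q.val v ≤ p.val v + ∑ c ∈ Aset g v p q, lcmDeficit g c v := by
  intro n
  induction n with
  | zero =>
      intro p q hcard hpq
      rcases eq_or_lt_of_le hpq with rfl | hlt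
      · exact Nat.le_add_right _ _
      · exact absurd hcard (by
          simp only [not_le]
          exact Finset.card_pos.mpr ⟨q, by simp [hlt]⟩)
  | succ n ih =>
      intro p q hcard hpq
      rcases eq_or_lt_of_le hpq with rfl | hlt
      · exact Nat.le_add_right _ _
      rcases (Aset g v p q).eq_empty_or_nonempty with hA | hA
      · have := upper0 g v (n + 1) p q hcard hpq hA
        omega
      obtain ⟨c0, hc0, hminimal⟩ : ∃ c0 ∈ Aset g v p q, ∀ c ∈ Aset g v p q, ¬ c < c0 := by
        obtain ⟨c0, hc0⟩ := Finset.exists_minimal hA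
        exact ⟨c0, hc0.prop, fun c hc => hc0.not_lt hc⟩
      obtain ⟨hpc0, hqc0, hdc0⟩ := (mem_Aset g).mp hc0
      -- everything in `Aset g v p c0` would be a smaller element of `Aset g v p q`
      have hA0 : Aset g v p c0 = ∅ := by
        rw [Finset.eq_empty_iff_forall_notMem]
        intro c hcm
        obtain ⟨hpc, hc0c, hdc⟩ := (mem_Aset g).mp hcm
        have hcc0 : c < c0 := by
          rcases deficit_comparable g hdc hdc0 with h | h
          · exact lt_of_le_of_ne h (fun h' => hc0c (h' ▸ le_rfl))
          · exact absurd h hc0c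
        have hqc : ¬ q ≤ c := fun hqc => hqc0 (le_trans hqc hcc0.le)
        exact hminimal c ((mem_Aset g).mpr ⟨hpc, hqc, hdc⟩) hcc0
      have hfc0 : c0.val v ≤ p.val v := upper0 g v (n + 1) p c0 hcard hpc0 hA0
      -- pick t0 realizing the gcd above c0
      have hc0nt : ∃ t : LcmLat g, c0 < t := by
        obtain ⟨u, hu⟩ := exists_join g q c0
        refine ⟨u, lt_of_le_of_ne (Subtype.coe_le_coe.mp (by rw [hu]; exact le_sup_right)) ?_⟩
        rintro rfl
        exact hqc0 (Subtype.coe_le_coe.mp (by rw [hu]; exact le_sup_left))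
      obtain ⟨t0, hc0t0, ht0v⟩ := exists_gcdAbove_eq g hc0nt v
      have ht0val : t0.val v = c0.val v + lcmDeficit g c0 v := by
        have h1 := le_lcmGcdAbove g c0 v
        have h2 := lcmDeficit_apply g c0 v
        omega
      obtain ⟨u, hu⟩ := exists_join g q t0
      have ht0u : t0 ≤ u := Subtype.coe_le_coe.mp (by rw [hu]; exact le_sup_right)
      have hqu : q ≤ u := Subtype.coe_le_coe.mp (by rw [hu]; exact le_sup_left)
      have hsub : Aset g v t0 u ⊆ (Aset g v p q).erase c0 := by
        intro c hcm
        obtain ⟨ht0c, huc, hdc⟩ := (mem_Aset g).mp hcm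
        have hc0c : c0 < c := lt_of_lt_of_le hc0t0 ht0c
        have hqc : ¬ q ≤ c := by
          intro hqc
          exact huc (Subtype.coe_le_coe.mp (by rw [hu]; exact sup_le hqc ht0c))
        refine Finset.mem_erase.mpr ⟨ne_of_gt hc0c, (mem_Aset g).mpr ⟨le_trans hpc0 hc0c.le, hqc, hdc⟩⟩
      have hcard' : (Finset.univ.filter fun s : LcmLat g => t0 < s).card ≤ n := by
        have hpt0 : p < t0 := lt_of_le_of_lt hpc0 hc0t0
        have hss : (Finset.univ.filter fun s : LcmLat g => t0 < s)
            ⊆ (Finset.univ.filter fun s : LcmLat g => p < s).erase t0 := by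
          intro s hs
          simp only [Finset.mem_filter, Finset.mem_erase, Finset.mem_univ, true_and] at hs ⊢
          exact ⟨ne_of_gt hs, lt_trans hpt0 hs⟩
        have := Finset.card_le_card hss
        have ht' : t0 ∈ Finset.univ.filter fun s : LcmLat g => p < s := by simp [hpt0]
        rw [Finset.card_erase_of_mem ht'] at this
        omega
      have ihu := ih t0 u hcard' ht0u
      have hqv : q.val v ≤ u.val v := lcm_apply_mono g hqu v
      have hsum1 : ∑ c ∈ Aset g v t0 u, lcmDeficit g c v
          ≤ ∑ c ∈ (Aset g v p q).erase c0, lcmDeficit g c v :=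
        Finset.sum_le_sum_of_subset hsub
      have hsum2 : ∑ c ∈ Aset g v p q, lcmDeficit g c v
          = lcmDeficit g c0 v + ∑ c ∈ (Aset g v p q).erase c0, lcmDeficit g c v :=
        (Finset.add_sum_erase _ _ hc0).symm
      omega

lemma coordGen_deficit_eq (q : LcmLat g) : coordGen (lcmDeficit g) q = q.val := by
  ext v
  have hl := lowerB g v (Aset g v ⊥ q).card ⊥ q le_rfl bot_le
  have hu := upperB g v (Finset.univ.filter fun t : LcmLat g => ⊥ < t).card ⊥ q le_rfl bot_le
  have hb : (⊥ : LcmLat g).val v = 0 := by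
    show (⊥ : Monomial V) v = 0
    simp [Finsupp.bot_eq_zero]
  have hsum : ∑ c ∈ Aset g v ⊥ q, lcmDeficit g c v = coordGen (lcmDeficit g) q v := by
    rw [coordGen, Finsupp.finset_sum_apply]
    apply Finset.sum_subset
    · intro c hcm
      obtain ⟨_, hqc, _⟩ := (mem_Aset g).mp hcm
      simp [hqc]
    · intro c hcf hcn
      by_contra h
      exact hcn ((mem_Aset g).mpr ⟨bot_le, by simpa using hcf, h⟩)
  omega

/-- The element of the lcm lattice given by a single generator. -/
def atomElem (i : ι) : LcmLat g := ⟨g i, {i}, Finset.sup_singleton.symm⟩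

lemma bot_val : (⊥ : LcmLat g).val = 0 := Finsupp.bot_eq_zero

lemma isAtom_atomElem (hne : ∀ i, g i ≠ 0) (hmin : ∀ i j, g i ≤ g j → i = j) (i : ι) :
    IsAtom (atomElem g i) := by
  constructor
  · intro h
    exact hne i (by simpa [atomElem, bot_val] using congrArg Subtype.val h)
  · intro b hb
    obtain ⟨s, hs⟩ := b.2
    rcases s.eq_empty_or_nonempty with rfl | ⟨j, hj⟩
    · exact Subtype.ext (by simp [hs, bot_val, Finsupp.bot_eq_zero])
    · exfalso
      have h1 : g j ≤ b.val := hs ▸ Finset.le_sup hj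
      have h2 : b.val ≤ g i := Subtype.coe_le_coe.mpr hb.le
      have hji := hmin j i (le_trans h1 h2)
      subst hji
      exact hb.not_ge (Subtype.coe_le_coe.mp h1)

lemma atom_val_eq (hne : ∀ i, g i ≠ 0) {a : LcmLat g} (ha : IsAtom a) :
    ∃ i, a.val = g i := by
  obtain ⟨s, hs⟩ := a.2
  rcases s.eq_empty_or_nonempty with rfl | ⟨j, hj⟩
  · exact absurd (Subtype.ext (show a.val = (⊥ : LcmLat g).val by
      simp [hs, bot_val, Finsupp.bot_eq_zero])) ha.1
  · have h1 : atomElem g j ≤ a := Subtype.coe_le_coe.mp (hs ▸ Finset.le_sup hj)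
    rcases ha.le_iff.mp h1 with h | h
    · exact absurd (by simpa [atomElem, bot_val] using congrArg Subtype.val h) (hne j)
    · exact ⟨j, by rw [← h]; rfl⟩

end DeficitAux

/-- Proposition 3.6 of Mapes: for a monomial ideal with minimal
generators `g`, the deficit labeling of its lcm lattice is a coordinatization,
and the resulting monomial ideal equals the original one (the coordinatization
monomials of the atoms are exactly the original minimal generators). -/
theorem stmt2 {ι V : Type*} [Fintype ι] (g : ι → Monomial V)
    (hne : ∀ i, g i ≠ 0) (hmin : ∀ i j, g i ≤ g j → i = j) :
    IsCoordinatization (lcmDeficit g) ∧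
      (Set.range fun a : {a : LcmLat g // IsAtom a} => coordGen (lcmDeficit g) a.val)
        = Set.range g := by
  have hco : ∀ q : LcmLat g, coordGen (lcmDeficit g) q = q.val := coordGen_deficit_eq g
  constructor
  · refine ⟨?_⟩
    have mem1 : ∀ p : LcmLat g, ∃ t : Finset {a : LcmLat g // IsAtom a},
        p.val = t.sup fun a => coordGen (lcmDeficit g) a.val := by
      intro p
      obtain ⟨s, hs⟩ := p.2
      refine ⟨s.image fun i => ⟨atomElem g i, isAtom_atomElem g hne hmin i⟩, ?_⟩
      rw [Finset.sup_image, hs]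
      exact Finset.sup_congr rfl fun i _ => (hco (atomElem g i)).symm
    have mem2 : ∀ l : Monomial V, (∃ t : Finset {a : LcmLat g // IsAtom a},
        l = t.sup fun a => coordGen (lcmDeficit g) a.val) → ∃ s : Finset ι, l = s.sup g := by
      rintro l ⟨t, ht⟩
      choose idx hidx using fun a : {a : LcmLat g // IsAtom a} => atom_val_eq g hne a.2
      refine ⟨t.image idx, ?_⟩
      rw [Finset.sup_image, ht]
      exact Finset.sup_congr rfl fun a _ => by rw [hco a.val, hidx a]; rfl
    exact ⟨⟨fun p => ⟨p.val, mem1 p⟩, fun l => ⟨l.val, mem2 l.val l.2⟩,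
      fun p => rfl, fun l => rfl⟩, Iff.rfl⟩
  · ext w
    simp only [Set.mem_range]
    constructor
    · rintro ⟨a, rfl⟩
      obtain ⟨i, hi⟩ := atom_val_eq g hne a.2
      exact ⟨i, by rw [hco a.val, hi]⟩
    · rintro ⟨i, rfl⟩
      exact ⟨⟨atomElem g i, isAtom_atomElem g hne hmin i⟩, by rw [hco]; rfl⟩
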